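/- (Key inequality for TV/L1 ADM.) Let V, W be spaces of real m×n and p×q matrices with the Frobenius inner product, H : V → V and L : V → W linear, F : V → ℝ and G : W → ℝ convex, β, ρ > 0, and L_{β,ρ}(X,R,Y,Z,W') = F(R) + G(Y) + (β/2)‖L(X) − Y‖_F² + ⟨L(X) − Y, Z⟩_F + (ρ/2)‖H(X) − R‖_F² + ⟨H(X) − R, W'⟩_F. Suppose (X*,R*,Y*,Z*,W'*) is a saddle point of L_{β,ρ} (so that in particular L(X*) = Y* and H(X*) = R*), and suppose (X_k,R_k,Y_k) minimizes (X,R,Y) ↦ L_{β,ρ}(X,R,Y,Z_k,W_k) over V×V×W. Then −βρ⟨Z_k − Z*, L(X_k) − Y_k⟩_F − βρ⟨W_k − W'*, H(X_k) − R_k⟩_F ≥ β²ρ‖L(X_k) − Y_k‖_F² + βρ²‖H(X_k) − R_k‖_F². -/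

import Mathlib

open Matrix

/-- Frobenius inner product on real matrices. -/
noncomputable def fip {m n : ℕ} (A B : Matrix (Fin m) (Fin n) ℝ) : ℝ :=
  (Aᵀ * B).trace

/-- Frobenius norm on real matrices. -/
noncomputable def fnorm {m n : ℕ} (A : Matrix (Fin m) (Fin n) ℝ) : ℝ :=
  Real.sqrt (fip A A)

/-- The augmented Lagrangian `L_{β,ρ}(X,R,Y,Z,W')` for the TV/L1 model. -/
noncomputable def lag5 {m n p q : ℕ}
    (H : Matrix (Fin m) (Fin n) ℝ →ₗ[ℝ] Matrix (Fin m) (Fin n) ℝ)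
    (L : Matrix (Fin m) (Fin n) ℝ →ₗ[ℝ] Matrix (Fin p) (Fin q) ℝ)
    (F : Matrix (Fin m) (Fin n) ℝ → ℝ) (G : Matrix (Fin p) (Fin q) ℝ → ℝ)
    (β ρ : ℝ)
    (X R : Matrix (Fin m) (Fin n) ℝ) (Y Z : Matrix (Fin p) (Fin q) ℝ)
    (W' : Matrix (Fin m) (Fin n) ℝ) : ℝ :=
  F R + G Y + β / 2 * (fnorm (L X - Y)) ^ 2 + fip (L X - Y) Z
    + ρ / 2 * (fnorm (H X - R)) ^ 2 + fip (H X - R) W'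

/-- Saddle point of the five-variable augmented Lagrangian. -/
def IsSaddle5 {m n p q : ℕ}
    (Φ : Matrix (Fin m) (Fin n) ℝ → Matrix (Fin m) (Fin n) ℝ →
      Matrix (Fin p) (Fin q) ℝ → Matrix (Fin p) (Fin q) ℝ →
      Matrix (Fin m) (Fin n) ℝ → ℝ)
    (Xs Rs : Matrix (Fin m) (Fin n) ℝ) (Ys Zs : Matrix (Fin p) (Fin q) ℝ)
    (Ws : Matrix (Fin m) (Fin n) ℝ) : Prop :=
  ∀ X R Y Z W', Φ Xs Rs Ys Z W' ≤ Φ Xs Rs Ys Zs Ws ∧ Φ Xs Rs Ys Zs Ws ≤ Φ X R Y Zs Ws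

lemma fip_eq {m n : ℕ} (A B : Matrix (Fin m) (Fin n) ℝ) :
    fip A B = ∑ i, ∑ j, A i j * B i j := by
  simp only [fip, Matrix.trace, Matrix.diag_apply, Matrix.mul_apply, Matrix.transpose_apply]
  exact Finset.sum_comm
lemma fip_self_nonneg {m n : ℕ} (A : Matrix (Fin m) (Fin n) ℝ) : 0 ≤ fip A A := by
  rw [fip_eq]
  exact Finset.sum_nonneg fun i _ => Finset.sum_nonneg fun j _ => mul_self_nonneg _
lemma fip_comm {m n : ℕ} (A B : Matrix (Fin m) (Fin n) ℝ) : fip A B = fip B A := by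
  simp [fip_eq, mul_comm]
lemma fip_add_right {m n : ℕ} (A B C : Matrix (Fin m) (Fin n) ℝ) :
    fip A (B + C) = fip A B + fip A C := by
  simp [fip_eq, Matrix.add_apply, mul_add, Finset.sum_add_distrib]
lemma fip_smul_left {m n : ℕ} (t : ℝ) (A B : Matrix (Fin m) (Fin n) ℝ) :
    fip (t • A) B = t * fip A B := by
  simp [fip_eq, Matrix.smul_apply, smul_eq_mul, Finset.mul_sum, mul_assoc]
lemma fip_smul_right {m n : ℕ} (t : ℝ) (A B : Matrix (Fin m) (Fin n) ℝ) :
    fip A (t • B) = t * fip A B := by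
  rw [fip_comm, fip_smul_left, fip_comm]
lemma fip_sub_left {m n : ℕ} (A B C : Matrix (Fin m) (Fin n) ℝ) :
    fip (A - B) C = fip A C - fip B C := by
  simp [fip_eq, Matrix.sub_apply, sub_mul, Finset.sum_sub_distrib]
lemma fip_sub_right {m n : ℕ} (A B C : Matrix (Fin m) (Fin n) ℝ) :
    fip A (B - C) = fip A B - fip A C := by
  simp [fip_eq, Matrix.sub_apply, mul_sub, Finset.sum_sub_distrib]
lemma fip_zero_left {m n : ℕ} (B : Matrix (Fin m) (Fin n) ℝ) : fip 0 B = 0 := by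
  simp [fip_eq]
lemma eq_zero_of_fip_self {m n : ℕ} {A : Matrix (Fin m) (Fin n) ℝ} (h : fip A A = 0) :
    A = 0 := by
  rw [fip_eq] at h
  ext i j
  have h1 := (Finset.sum_eq_zero_iff_of_nonneg
    (fun i _ => Finset.sum_nonneg fun j _ => mul_self_nonneg _)).mp h i (Finset.mem_univ i)
  have h2 := (Finset.sum_eq_zero_iff_of_nonneg
    (fun j _ => mul_self_nonneg _)).mp h1 j (Finset.mem_univ j)
  simpa [mul_self_eq_zero] using h2
lemma fnorm_sq {m n : ℕ} (A : Matrix (Fin m) (Fin n) ℝ) : fnorm A ^ 2 = fip A A :=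
  Real.sq_sqrt (fip_self_nonneg A)

theorem stmt14 {m n p q : ℕ}
    (H : Matrix (Fin m) (Fin n) ℝ →ₗ[ℝ] Matrix (Fin m) (Fin n) ℝ)
    (L : Matrix (Fin m) (Fin n) ℝ →ₗ[ℝ] Matrix (Fin p) (Fin q) ℝ)
    (F : Matrix (Fin m) (Fin n) ℝ → ℝ) (G : Matrix (Fin p) (Fin q) ℝ → ℝ)
    (hF : ConvexOn ℝ Set.univ F) (hG : ConvexOn ℝ Set.univ G)
    (β ρ : ℝ) (hβ : 0 < β) (hρ : 0 < ρ)
    (Xs Rs : Matrix (Fin m) (Fin n) ℝ) (Ys Zs : Matrix (Fin p) (Fin q) ℝ)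
    (Ws : Matrix (Fin m) (Fin n) ℝ)
    (hsaddle : IsSaddle5 (lag5 H L F G β ρ) Xs Rs Ys Zs Ws)
    (Xk Rk : Matrix (Fin m) (Fin n) ℝ) (Yk Zk : Matrix (Fin p) (Fin q) ℝ)
    (Wk : Matrix (Fin m) (Fin n) ℝ)
    (hmin : ∀ X R Y, lag5 H L F G β ρ Xk Rk Yk Zk Wk ≤ lag5 H L F G β ρ X R Y Zk Wk) :
    β ^ 2 * ρ * (fnorm (L Xk - Yk)) ^ 2 + β * ρ ^ 2 * (fnorm (H Xk - Rk)) ^ 2 ≤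
    -(β * ρ) * fip (Zk - Zs) (L Xk - Yk) - β * ρ * fip (Wk - Ws) (H Xk - Rk) := by
  -- Step 1: feasibility of saddle point
  have hc : L Xs - Ys = 0 := by
    have h := (hsaddle Xs Rs Ys (Zs + (L Xs - Ys)) (Ws + (H Xs - Rs))).1
    simp only [lag5, fip_add_right] at h
    have h1 : fip (L Xs - Ys) (L Xs - Ys) = 0 :=
      le_antisymm (by nlinarith [fip_self_nonneg (H Xs - Rs)]) (fip_self_nonneg _)
    exact eq_zero_of_fip_self h1
  have hd : H Xs - Rs = 0 := by
    have h := (hsaddle Xs Rs Ys (Zs + (L Xs - Ys)) (Ws + (H Xs - Rs))).1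
    simp only [lag5, fip_add_right] at h
    have h1 : fip (H Xs - Rs) (H Xs - Rs) = 0 :=
      le_antisymm (by nlinarith [fip_self_nonneg (L Xs - Ys)]) (fip_self_nonneg _)
    exact eq_zero_of_fip_self h1
  have hLXs : L Xs = Ys := sub_eq_zero.mp hc
  have hHXs : H Xs = Rs := sub_eq_zero.mp hd
  have hAa := fip_self_nonneg (L Xk - Yk)
  have hBb := fip_self_nonneg (H Xk - Rk)
  -- the key scalar inequality, valid for each t ∈ (0,1]
  have key : ∀ t : ℝ, 0 < t → t ≤ 1 →
      β * fip (L Xk - Yk) (L Xk - Yk) + ρ * fip (H Xk - Rk) (H Xk - Rk)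
        + (fip (L Xk - Yk) Zk - fip (L Xk - Yk) Zs)
        + (fip (H Xk - Rk) Wk - fip (H Xk - Rk) Ws)
      ≤ t * (β * fip (L Xk - Yk) (L Xk - Yk) + ρ * fip (H Xk - Rk) (H Xk - Rk)) := by
    intro t ht0 ht1
    -- saddle side: combination moving from the saddle towards the iterate
    have hLA : L ((1 - t) • Xs + t • Xk) - ((1 - t) • Ys + t • Yk)
        = t • (L Xk - Yk) := by
      simp only [map_add, _root_.map_smul, hLXs]
      module
    have hHA : H ((1 - t) • Xs + t • Xk) - ((1 - t) • Rs + t • Rk)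
        = t • (H Xk - Rk) := by
      simp only [map_add, _root_.map_smul, hHXs]
      module
    have hA := (hsaddle ((1 - t) • Xs + t • Xk) ((1 - t) • Rs + t • Rk)
      ((1 - t) • Ys + t • Yk) 0 0).2
    simp only [lag5, hLA, hHA, hc, hd, fnorm_sq, fip_smul_left, fip_smul_right,
      fip_zero_left, smul_eq_mul] at hA
    have hFA := hF.2 (Set.mem_univ Rs) (Set.mem_univ Rk)
      (by linarith : (0:ℝ) ≤ 1 - t) ht0.le (by ring)
    have hGA := hG.2 (Set.mem_univ Ys) (Set.mem_univ Yk)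
      (by linarith : (0:ℝ) ≤ 1 - t) ht0.le (by ring)
    simp only [smul_eq_mul] at hFA hGA
    have hA3 : F Rs + G Ys ≤ (F Rk + G Yk)
        + t * (β / 2 * fip (L Xk - Yk) (L Xk - Yk) + ρ / 2 * fip (H Xk - Rk) (H Xk - Rk))
        + (fip (L Xk - Yk) Zs + fip (H Xk - Rk) Ws) :=
      le_of_mul_le_mul_left (by linarith [hA, hFA, hGA]) ht0
    -- minimizer side: combination moving from the iterate towards the saddle
    have hLB : L ((1 - t) • Xk + t • Xs) - ((1 - t) • Yk + t • Ys)
        = (1 - t) • (L Xk - Yk) := by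
      simp only [map_add, _root_.map_smul, hLXs]
      module
    have hHB : H ((1 - t) • Xk + t • Xs) - ((1 - t) • Rk + t • Rs)
        = (1 - t) • (H Xk - Rk) := by
      simp only [map_add, _root_.map_smul, hHXs]
      module
    have hB := hmin ((1 - t) • Xk + t • Xs) ((1 - t) • Rk + t • Rs)
      ((1 - t) • Yk + t • Ys)
    simp only [lag5, hLB, hHB, fnorm_sq, fip_smul_left, fip_smul_right] at hB
    have hFB := hF.2 (Set.mem_univ Rk) (Set.mem_univ Rs)
      (by linarith : (0:ℝ) ≤ 1 - t) ht0.le (by ring)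
    have hGB := hG.2 (Set.mem_univ Yk) (Set.mem_univ Ys)
      (by linarith : (0:ℝ) ≤ 1 - t) ht0.le (by ring)
    simp only [smul_eq_mul] at hFB hGB
    have hB3 : (F Rk + G Yk)
        + (2 - t) * (β / 2 * fip (L Xk - Yk) (L Xk - Yk) + ρ / 2 * fip (H Xk - Rk) (H Xk - Rk))
        + (fip (L Xk - Yk) Zk + fip (H Xk - Rk) Wk) ≤ F Rs + G Ys :=
      le_of_mul_le_mul_left (by linarith [hB, hFB, hGB]) ht0
    linarith [hA3, hB3]
  -- let t → 0
  have hx : β * fip (L Xk - Yk) (L Xk - Yk) + ρ * fip (H Xk - Rk) (H Xk - Rk)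
      + (fip (L Xk - Yk) Zk - fip (L Xk - Yk) Zs)
      + (fip (H Xk - Rk) Wk - fip (H Xk - Rk) Ws) ≤ 0 := by
    set C := β * fip (L Xk - Yk) (L Xk - Yk) + ρ * fip (H Xk - Rk) (H Xk - Rk) with hC
    have hC0 : 0 ≤ C := add_nonneg (mul_nonneg hβ.le hAa) (mul_nonneg hρ.le hBb)
    set x := C + (fip (L Xk - Yk) Zk - fip (L Xk - Yk) Zs)
      + (fip (H Xk - Rk) Wk - fip (H Xk - Rk) Ws) with hxdef
    show x ≤ 0
    by_contra hxpos
    push_neg at hxpos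
    rcases eq_or_lt_of_le hC0 with hCeq | hClt
    · have := key 1 one_pos le_rfl
      nlinarith
    · have ht0 : 0 < min 1 (x / (2 * C)) := lt_min one_pos (div_pos hxpos (by linarith))
      have h := key (min 1 (x / (2 * C))) ht0 (min_le_left _ _)
      have h2 : min 1 (x / (2 * C)) * C ≤ x / 2 := by
        calc min 1 (x / (2 * C)) * C ≤ (x / (2 * C)) * C :=
              mul_le_mul_of_nonneg_right (min_le_right _ _) hC0
          _ = x / 2 := by field_simp
      linarith
  -- conclude
  have e1 : fip (Zk - Zs) (L Xk - Yk) = fip (L Xk - Yk) Zk - fip (L Xk - Yk) Zs := by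
    rw [fip_comm, fip_sub_right]
  have e2 : fip (Wk - Ws) (H Xk - Rk) = fip (H Xk - Rk) Wk - fip (H Xk - Rk) Ws := by
    rw [fip_comm, fip_sub_right]
  rw [fnorm_sq, fnorm_sq, e1, e2]
  nlinarith [mul_nonpos_of_nonneg_of_nonpos (mul_pos hβ hρ).le hx]
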